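/- arXiv:1509.06357 — 2 statements merged into one kernel-verified Lean document; each statement's English description precedes it below -/
import Mathlib

section
/- Let k ≥ 1, let α and β be two k-colorings of a finite simple graph G = (V,E), and let v be a vertex of G of degree at most k−2. Then C_k(G) contains a path from α to β if and only if C_k(G−v) contains a path from the restriction of α to V∖{v} to the restriction of β to V∖{v}. -/
open SimpleGraph

/-- A proper `k`-coloring of a graph. -/
def IsColoring {W : Type*} (G : SimpleGraph W) (k : ℕ) (α : W → Fin k) : Prop :=
  ∀ u v : W, G.Adj u v → α u ≠ α v

/-- The `k`-color graph `C_k(G)`: nodes are proper `k`-colorings of `G`,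
two colorings being adjacent iff they differ on exactly one vertex. -/
def colorGraph {W : Type*} (G : SimpleGraph W) (k : ℕ) :
    SimpleGraph {α : W → Fin k // IsColoring G k α} where
  Adj α β := ∃! w, α.1 w ≠ β.1 w
  symm := by
    constructor
    rintro α β ⟨w, hw, hu⟩
    exact ⟨w, hw.symm, fun u hu' => hu u hu'.symm⟩
  loopless := by
    constructor
    rintro α ⟨w, hw, -⟩
    exact hw rfl

/-- The subgraph of a labeled graph consisting of the edges between
equally labeled nodes. -/
def sameLabelSub {N L : Type*} (H : SimpleGraph N) (f : N → L) : SimpleGraph N where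
  Adj x y := H.Adj x y ∧ f x = f y
  symm := ⟨fun _ _ h => ⟨h.1.symm, h.2.symm⟩⟩
  loopless := ⟨fun x h => H.irrefl h.1⟩

/-- The quotient graph obtained from a labeled graph by contracting every
(maximal) connected set of equally labeled nodes (i.e. every label component)
into a single node. -/
def quotGraph {N L : Type*} (H : SimpleGraph N) (f : N → L) :
    SimpleGraph (sameLabelSub H f).ConnectedComponent where
  Adj c d := c ≠ d ∧ ∃ a b, (sameLabelSub H f).connectedComponentMk a = c ∧
      (sameLabelSub H f).connectedComponentMk b = d ∧ H.Adj a b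
  symm := by
    constructor
    rintro c d ⟨hne, a, b, ha, hb, hab⟩
    exact ⟨hne.symm, b, a, hb, ha, hab.symm⟩
  loopless := ⟨fun c h => h.1 rfl⟩

/-- The common label of a label component. -/
def quotLabel {N L : Type*} (H : SimpleGraph N) (f : N → L) :
    (sameLabelSub H f).ConnectedComponent → L :=
  SimpleGraph.ConnectedComponent.lift f (by
    intro v w p hp
    clear hp
    induction p with
    | nil => rfl
    | cons h _ ih => exact (h : H.Adj _ _ ∧ f _ = f _).2.trans ih)

/-- The label of a coloring: its restriction to the terminal set `T`. -/
def csgLabelFun {W : Type*} (G : SimpleGraph W) (k : ℕ) (T : Set W) :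
    {α : W → Fin k // IsColoring G k α} → (T → Fin k) :=
  fun α t => α.1 t.1

/-- The node set of the contracted solution graph: the label components. -/
abbrev CSGNode {W : Type*} (G : SimpleGraph W) (k : ℕ) (T : Set W) :=
  (sameLabelSub (colorGraph G k) (csgLabelFun G k T)).ConnectedComponent

/-- The contracted solution graph `C^c_k(G,T)`. -/
def CSG {W : Type*} (G : SimpleGraph W) (k : ℕ) (T : Set W) : SimpleGraph (CSGNode G k T) :=
  quotGraph (colorGraph G k) (csgLabelFun G k T)

/-- The `γ`-node of the contracted solution graph: the label component containing `γ`. -/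
def csgNode {W : Type*} (G : SimpleGraph W) (k : ℕ) (T : Set W)
    (γ : {α : W → Fin k // IsColoring G k α}) : CSGNode G k T :=
  (sameLabelSub (colorGraph G k) (csgLabelFun G k T)).connectedComponentMk γ

/-- The label of a node of the contracted solution graph: the common restriction
to `T` of its colorings. -/
def csgLabel {W : Type*} (G : SimpleGraph W) (k : ℕ) (T : Set W) :
    CSGNode G k T → (T → Fin k) :=
  quotLabel (colorGraph G k) (csgLabelFun G k T)

/-- The restriction of a proper coloring to an induced subgraph. -/
def restrictColoring {W : Type*} (G : SimpleGraph W) (k : ℕ) (S : Set W)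
    (γ : {α : W → Fin k // IsColoring G k α}) :
    {α : S → Fin k // IsColoring (G.induce S) k α} :=
  ⟨fun u => γ.1 u.1, fun u w h => γ.2 u.1 w.1 h⟩

/-- A graph is chordal if it contains no induced cycle of length greater than 3. -/
def Chordal {W : Type*} (G : SimpleGraph W) : Prop :=
  ∀ n : ℕ, 4 ≤ n → IsEmpty (SimpleGraph.cycleGraph n ↪g G)

/-- `S` is a vertex cut: `G - S` is disconnected. -/
def IsVertexCut {W : Type*} (G : SimpleGraph W) (S : Set W) : Prop :=
  ¬ (G.induce Sᶜ).Preconnected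

/-- `G` is `l`-connected. -/
def LConnected {W : Type*} (G : SimpleGraph W) (l : ℕ) : Prop :=
  G.Connected ∧ l + 1 ≤ Nat.card W ∧ ∀ S : Set W, IsVertexCut G S → l ≤ S.ncard

/-- A labeled graph `(H,ℓ)`, whose labels are `k`-colorings of the complete graph
on a vertex (type) `S`, is an `(|S|,k)`-color-complete graph. -/
def IsColorComplete {N S : Type*} (k : ℕ) (H : SimpleGraph N) (ℓ : N → S → Fin k) : Prop :=
  (∀ x, Function.Injective (ℓ x)) ∧
  (∀ f : S → Fin k, Function.Injective f → ∃! x, ℓ x = f) ∧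
  (∀ x y, H.Adj x y ↔ ∃! s, ℓ x s ≠ ℓ y s)

/-- The injective neighborhood property. -/
def INP {N L : Type*} (H : SimpleGraph N) (ℓ : N → L) : Prop :=
  ∀ u v w : N, H.Adj u v → H.Adj u w → v ≠ w → ℓ v ≠ ℓ w

/-- The weight `w(P)` of a walk `P` in a labeled graph: the sum over the vertices `x`
of `P` of the number of colors used by labels of neighbors of `x` in `P` but not by
the label of `x`. -/
noncomputable def walkWeight {N S : Type*} {k : ℕ} {G : SimpleGraph N} (ℓ : N → S → Fin k)
    {a b : N} (P : G.Walk a b) : ℕ :=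
  letI := Classical.decEq N
  ∑ x ∈ P.support.toFinset,
    ((⋃ y ∈ P.toSubgraph.neighborSet x, Set.range (ℓ y)) \ Set.range (ℓ x)).ncard

/-- The vertex set of `G - v`. -/
def delSet {V : Type*} (v : V) : Set V := {u | u ≠ v}

/-- The terminal set `T \ {v}`, viewed as a set of vertices of `G - v`. -/
def Tdel {V : Type*} (T : Set V) (v : V) : Set ↥(delSet v) := {u | u.1 ∈ T}

lemma reach_of_agree_off {W : Type*} {G : SimpleGraph W} {k : ℕ}
    (α β : {f : W → Fin k // IsColoring G k f}) (w : W)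
    (h : ∀ x, x ≠ w → α.1 x = β.1 x) : (colorGraph G k).Reachable α β := by
  by_cases hw : α.1 w = β.1 w
  · have : α = β := Subtype.ext (funext fun x => by
      by_cases hx : x = w
      · subst hx; exact hw
      · exact h x hx)
    exact this ▸ SimpleGraph.Reachable.refl _
  · exact SimpleGraph.Adj.reachable
      ⟨w, hw, fun y hy => by_contra fun hne => hy (h y hne)⟩

lemma restrict_reach_of_adj {V : Type} [Fintype V] [DecidableEq V]
    (G : SimpleGraph V) (k : ℕ) (v : V)
    {α β : {f : V → Fin k // IsColoring G k f}}
    (h : (colorGraph G k).Adj α β) :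
    (colorGraph (G.induce (delSet v)) k).Reachable
      (restrictColoring G k (delSet v) α) (restrictColoring G k (delSet v) β) := by
  obtain ⟨w, hw, huniq⟩ := h
  by_cases hwv : w = v
  · have : restrictColoring G k (delSet v) α = restrictColoring G k (delSet v) β := by
      apply Subtype.ext
      funext x
      by_contra hc
      exact x.2 ((huniq x.1 hc).trans hwv)
    exact this ▸ SimpleGraph.Reachable.refl _
  · exact reach_of_agree_off _ _ ⟨w, hwv⟩ (fun x hx => by
      by_contra hc
      exact hx (Subtype.ext (huniq x.1 hc)))

lemma lift_reach {V : Type} [Fintype V] [DecidableEq V]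
    (G : SimpleGraph V) [DecidableRel G.Adj] (k : ℕ) (v : V) (hdeg : G.degree v ≤ k - 2)
    {δ ε : {f : ↥(delSet v) → Fin k // IsColoring (G.induce (delSet v)) k f}}
    (p : (colorGraph (G.induce (delSet v))) k |>.Walk δ ε) :
    ∀ α β : {f : V → Fin k // IsColoring G k f},
      restrictColoring G k (delSet v) α = δ → restrictColoring G k (delSet v) β = ε →
      (colorGraph G k).Reachable α β := by
  induction p with
  | nil =>
    intro α β hα hβ
    apply reach_of_agree_off α β v
    intro x hx
    have := congrFun (congrArg Subtype.val (hα.trans hβ.symm)) ⟨x, hx⟩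
    exact this
  | @cons δ δ₂ ε hadj q ih =>
    intro α β hα hβ
    obtain ⟨u, hu, huniq⟩ := hadj
    -- restrict α = δ
    have hrα : ∀ x : ↥(delSet v), α.1 x.1 = δ.1 x :=
      fun x => congrFun (congrArg Subtype.val hα) x
    -- k ≥ 2
    have hk2 : 2 ≤ k := by
      by_contra hlt
      push_neg at hlt
      interval_cases k
      · exact (Fin.elim0 (δ.1 u))
      · exact hu (Subsingleton.elim _ _)
    -- the set of forbidden colors
    set s : Finset (Fin k) := (G.neighborFinset v).image α.1 ∪ {δ₂.1 u} with hs
    have hcard : s.card < k := by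
      calc s.card ≤ ((G.neighborFinset v).image α.1).card + 1 := by
            apply (Finset.card_union_le _ _).trans
            simp
        _ ≤ G.degree v + 1 := by
            have := Finset.card_image_le (s := G.neighborFinset v) (f := α.1)
            rw [SimpleGraph.degree]
            omega
        _ < k := by omega
    have hfree : ∃ c : Fin k, c ∉ s := by
      by_contra hc
      push_neg at hc
      have : (Finset.univ : Finset (Fin k)) ⊆ s := fun c _ => hc c
      have := Finset.card_le_card this
      simp at this
      omega
    obtain ⟨c, hc⟩ := hfree
    have hcnb : ∀ y, G.Adj v y → c ≠ α.1 y := by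
      intro y hy hcy
      apply hc
      rw [hs]
      apply Finset.mem_union_left
      exact Finset.mem_image.2 ⟨y, (G.mem_neighborFinset v y).2 hy, hcy.symm⟩
    have hcu : c ≠ δ₂.1 u := by
      intro hcy
      apply hc
      rw [hs]
      exact Finset.mem_union_right _ (by simp [hcy])
    -- first intermediate coloring: recolor v to c
    have huv : u.1 ≠ v := u.2
    set f₁ : V → Fin k := Function.update α.1 v c with hf₁
    have hf₁v : f₁ v = c := Function.update_self v c α.1
    have hf₁x : ∀ x, x ≠ v → f₁ x = α.1 x := fun x hx => Function.update_of_ne hx c α.1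
    have hcol₁ : IsColoring G k f₁ := by
      intro x y hxy
      by_cases hx : x = v
      · have hadjvy : G.Adj v y := hx ▸ hxy
        have hyv : y ≠ v := fun h => G.loopless.irrefl v (h ▸ hadjvy)
        rw [hx, hf₁v, hf₁x y hyv]
        exact hcnb y hadjvy
      · by_cases hy : y = v
        · subst hy
          rw [hf₁v, hf₁x x hx]
          exact fun h => hcnb x hxy.symm h.symm
        · rw [hf₁x x hx, hf₁x y hy]
          exact α.2 x y hxy
    -- second: recolor u to δ₂ u
    set f₂ : V → Fin k := Function.update f₁ u.1 (δ₂.1 u) with hf₂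
    have hf₂u : f₂ u.1 = δ₂.1 u := Function.update_self u.1 (δ₂.1 u) f₁
    have hf₂x : ∀ x, x ≠ u.1 → f₂ x = f₁ x := fun x hx => Function.update_of_ne hx _ f₁
    -- values of δ and δ₂ agree off u
    have hδδ₂ : ∀ x : ↥(delSet v), x ≠ u → δ.1 x = δ₂.1 x := by
      intro x hx
      by_contra hne
      exact hx (huniq x hne)
    have hf₂val : ∀ x : ↥(delSet v), f₂ x.1 = δ₂.1 x := by
      intro x
      by_cases hxu : x = u
      · subst hxu; exact hf₂u
      · have hx1 : x.1 ≠ u.1 := fun h => hxu (Subtype.ext h)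
        rw [hf₂x x.1 hx1, hf₁x x.1 x.2, hrα x, hδδ₂ x hxu]
    have hcol₂ : IsColoring G k f₂ := by
      intro x y hxy
      by_cases hx : x = u.1
      · have hadjuy : G.Adj u.1 y := hx ▸ hxy
        have hyu : y ≠ u.1 := fun h => G.loopless.irrefl u.1 (h ▸ hadjuy)
        rw [hx, hf₂u, hf₂x y hyu]
        by_cases hyv : y = v
        · rw [hyv, hf₁v]
          exact fun h => hcu h.symm
        · rw [hf₁x y hyv, hrα ⟨y, hyv⟩, hδδ₂ ⟨y, hyv⟩ (fun h => hyu (congrArg Subtype.val h))]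
          exact δ₂.2 u ⟨y, hyv⟩ hadjuy
      · by_cases hy : y = u.1
        · have hadjxu : G.Adj x u.1 := hy ▸ hxy
          rw [hy, hf₂u, hf₂x x hx]
          by_cases hxv : x = v
          · rw [hxv, hf₁v]
            exact hcu
          · rw [hf₁x x hxv, hrα ⟨x, hxv⟩, hδδ₂ ⟨x, hxv⟩ (fun h => hx (congrArg Subtype.val h))]
            exact fun h => δ₂.2 u ⟨x, hxv⟩ hadjxu.symm h.symm
        · rw [hf₂x x hx, hf₂x y hy]
          exact hcol₁ x y hxy
    set α₁ : {f : V → Fin k // IsColoring G k f} := ⟨f₁, hcol₁⟩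
    set α₂ : {f : V → Fin k // IsColoring G k f} := ⟨f₂, hcol₂⟩
    have h1 : (colorGraph G k).Reachable α α₁ :=
      (reach_of_agree_off α₁ α v (fun x hx => hf₁x x hx)).symm
    have h2 : (colorGraph G k).Reachable α₁ α₂ :=
      (reach_of_agree_off α₂ α₁ u.1 (fun x hx => hf₂x x hx)).symm
    have hrest : restrictColoring G k (delSet v) α₂ = δ₂ :=
      Subtype.ext (funext fun x => hf₂val x)
    exact (h1.trans h2).trans (ih α₂ β hrest hβ)

/-- if `v` has degree at most `k - 2`, then `C_k(G)` contains a path from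
`α` to `β` iff `C_k(G-v)` contains a path between the restrictions of `α` and `β`. -/
theorem statement_5 {V : Type} [Fintype V] [DecidableEq V]
    (G : SimpleGraph V) [DecidableRel G.Adj] (k : ℕ) (hk : 1 ≤ k)
    (α β : {f : V → Fin k // IsColoring G k f}) (v : V) (hdeg : G.degree v ≤ k - 2) :
    (colorGraph G k).Reachable α β ↔
      (colorGraph (G.induce (delSet v)) k).Reachable
        (restrictColoring G k (delSet v) α) (restrictColoring G k (delSet v) β) := by
  constructor
  · intro h
    obtain ⟨p⟩ := h
    induction p with
    | nil => exact SimpleGraph.Reachable.refl _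
    | cons hadj q ih =>
      exact (restrict_reach_of_adj G k v hadj).trans ih
  · intro h
    obtain ⟨p⟩ := h
    exact lift_reach G k v hdeg p α β rfl rfl
end

section
/- Let k ≥ 1, let G' = (V',E') be a subgraph of a graph G = (V,E), and let α and β be two k-colorings of G. Let α' and β' be the restrictions of α and β to V'. Then for any T' ⊆ V' and T ⊆ V: if the α'-node and the β'-node lie in different connected components of C^c_k(G',T'), then the α-node and the β-node lie in different connected components of C^c_k(G,T). -/
open SimpleGraph

lemma sameLabelSub_le {N L : Type*} (H : SimpleGraph N) (f : N → L) :
    sameLabelSub H f ≤ H := fun _ _ h => by unfold sameLabelSub at h; exact h.1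

lemma quot_reachable_of_reachable {N L : Type*} {H : SimpleGraph N} {f : N → L}
    {a b : N} (h : H.Reachable a b) :
    (quotGraph H f).Reachable ((sameLabelSub H f).connectedComponentMk a)
      ((sameLabelSub H f).connectedComponentMk b) := by
  obtain ⟨p⟩ := h
  induction p with
  | nil => exact Reachable.refl _
  | @cons u v w huv _ ih =>
    refine Reachable.trans ?_ ih
    by_cases hc : (sameLabelSub H f).connectedComponentMk u =
        (sameLabelSub H f).connectedComponentMk v
    · rw [hc]
    · exact Adj.reachable (by unfold quotGraph; exact ⟨hc, u, v, rfl, rfl, huv⟩)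

lemma reachable_of_quot_reachable {N L : Type*} {H : SimpleGraph N} {f : N → L}
    {a b : N} (h : (quotGraph H f).Reachable ((sameLabelSub H f).connectedComponentMk a)
      ((sameLabelSub H f).connectedComponentMk b)) : H.Reachable a b := by
  obtain ⟨p⟩ := h
  have : ∀ (c d : (sameLabelSub H f).ConnectedComponent) (p : (quotGraph H f).Walk c d)
      (a b : N), (sameLabelSub H f).connectedComponentMk a = c →
      (sameLabelSub H f).connectedComponentMk b = d → H.Reachable a b := by
    intro c d p
    induction p with
    | nil =>
      intro a b ha hb
      rw [← hb] at ha
      exact ((SimpleGraph.ConnectedComponent.eq).mp ha).mono (sameLabelSub_le H f)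
    | @cons u v w huv _ ih =>
      intro a b ha hb
      unfold quotGraph at huv
      obtain ⟨-, x, y, hx, hy, hxy⟩ := huv
      have h1 : H.Reachable a x := by
        rw [← hx] at ha
        exact ((SimpleGraph.ConnectedComponent.eq).mp ha).mono (sameLabelSub_le H f)
      exact (h1.trans hxy.reachable).trans (ih y b hy hb)
  exact this _ _ p a b rfl rfl

/-- if `G'` is a subgraph of `G` (on vertex set `V' ⊆ V`), `α, β` are
`k`-colorings of `G` restricting to `α', β'` on `V'`, and the `α'`-node and `β'`-node
are separated in `C^c_k(G',T')`, then the `α`-node and `β`-node are separated in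
`C^c_k(G,T)`. -/
theorem statement_16 {V : Type} [Fintype V] [DecidableEq V]
    (G : SimpleGraph V) (k : ℕ) (hk : 1 ≤ k)
    (V' : Set V) (G' : SimpleGraph ↥V')
    (hsub : ∀ a b : ↥V', G'.Adj a b → G.Adj a.1 b.1)
    (α β : {f : V → Fin k // IsColoring G k f})
    (T : Set V) (T' : Set ↥V')
    (α' β' : {f : ↥V' → Fin k // IsColoring G' k f})
    (hα' : α'.1 = fun u => α.1 u.1) (hβ' : β'.1 = fun u => β.1 u.1) :
    ¬ (CSG G' k T').Reachable (csgNode G' k T' α') (csgNode G' k T' β') →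
      ¬ (CSG G k T).Reachable (csgNode G k T α) (csgNode G k T β) := by
  intro hsep hreach
  apply hsep
  -- lift reachability from the contracted graph to the color graph of G
  have hcg : (colorGraph G k).Reachable α β := reachable_of_quot_reachable hreach
  -- restriction map
  let res : {f : V → Fin k // IsColoring G k f} → {f : ↥V' → Fin k // IsColoring G' k f} :=
    fun γ => ⟨fun u => γ.1 u.1, fun u w h => γ.2 u.1 w.1 (hsub u w h)⟩
  have hres : (colorGraph G' k).Reachable (res α) (res β) := by
    clear hreach hα' hβ' hsep
    obtain ⟨p⟩ := hcg

    induction p with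
    | nil => exact Reachable.refl _
    | @cons u v w huv _ ih =>
      refine Reachable.trans ?_ ih
      obtain ⟨x, hx, hxu⟩ := huv
      by_cases hmem : ∃ x' : ↥V', (res u).1 x' ≠ (res v).1 x'
      · obtain ⟨x', hx'⟩ := hmem
        refine Adj.reachable ⟨x', hx', ?_⟩
        intro y' hy'
        have h1 := hxu x'.1 hx'
        have h2 := hxu y'.1 hy'
        exact Subtype.ext (h2.trans h1.symm)
      · push_neg at hmem
        have : res u = res v := Subtype.ext (funext fun x' => hmem x')
        rw [this]
  have hα : res α = α' := Subtype.ext hα'.symm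
  have hβ : res β = β' := Subtype.ext hβ'.symm
  rw [hα, hβ] at hres
  exact quot_reachable_of_reachable hres
end
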